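/- Suppose g₂ : ℝ² → (0,∞) is C¹ and positive-valued, Λ₁ := sup_{t≥0}|ζ_d(t)| < ∞, and ψ₂ : [0,∞) → [0,∞) is a continuous non-decreasing function with max{ |∇g₂(ζ)| : |ζ| ≤ Λ₁ + s } ≤ ψ₂(s) for all s ≥ 0. Suppose further that L : [0,∞) → [1,∞) is continuous non-decreasing with |f̃(t,x) − f̃(t,ξ)| ≤ L(|x|+|ξ|)|x−ξ| and |f̃(t,ξ)| ≤ L(|ξ|)|ξ| for all t ≥ 0, x, ξ ∈ ℝ². Define M(s) := ((1+μ)² + L(s))·(1 + s·ψ₂(s)/min{ g₂(ζ) : |ζ| ≤ Λ₁ + s }). Then for all t ≥ 0 and all x, ξ ∈ ℝ²: g̃(t,x)·|k(t,x) − k(t,ξ)| ≤ M(|x| + |ξ|)·|ξ − x|. -/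

import Mathlib

open Set Filter

/- STATEMENT 14: Lipschitz-type estimate g̃(t,x)|k(t,x) - k(t,ξ)| ≤ M(|x|+|ξ|)|ξ-x|. -/

noncomputable def k14 (μ : ℝ) (ftil gtil : ℝ → EuclideanSpace ℝ (Fin 2) → ℝ)
    (t : ℝ) (x : EuclideanSpace ℝ (Fin 2)) : ℝ :=
  -(((1 + μ ^ 2) * x 0 + 2 * μ * x 1 + ftil t x) / gtil t x)

lemma coord_le_norm14 (y : EuclideanSpace ℝ (Fin 2)) (i : Fin 2) : |y i| ≤ ‖y‖ := by
  rw [EuclideanSpace.norm_eq]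
  have h1 : ‖y i‖ ^ 2 ≤ ∑ j, ‖y j‖ ^ 2 :=
    Finset.single_le_sum (f := fun j => ‖y j‖ ^ 2) (fun j _ => by positivity) (Finset.mem_univ i)
  calc |y i| = Real.sqrt (‖y i‖ ^ 2) := by
        rw [Real.sqrt_sq_eq_abs, Real.norm_eq_abs, abs_abs]
    _ ≤ Real.sqrt (∑ j, ‖y j‖ ^ 2) := Real.sqrt_le_sqrt h1

theorem stmt_14 (μ : ℝ) (hμ : 0 < μ)
    (g₂ : EuclideanSpace ℝ (Fin 2) → ℝ)
    (hg₂C1 : ContDiff ℝ 1 g₂) (hg₂pos : ∀ ζ, 0 < g₂ ζ)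
    (ζd : ℝ → EuclideanSpace ℝ (Fin 2)) (hζdc : Continuous ζd)
    (hζdbd : BddAbove ((fun t => ‖ζd t‖) '' Ici 0))
    (Λ₁ : ℝ) (hΛ₁ : Λ₁ = sSup ((fun t => ‖ζd t‖) '' Ici 0))
    (ψ₂ : ℝ → ℝ) (hψ₂c : ContinuousOn ψ₂ (Ici 0)) (hψ₂m : MonotoneOn ψ₂ (Ici 0))
    (hψ₂nn : ∀ s ≥ (0:ℝ), 0 ≤ ψ₂ s)
    (hψ₂ : ∀ s ≥ (0:ℝ), ∀ ζ : EuclideanSpace ℝ (Fin 2), ‖ζ‖ ≤ Λ₁ + s →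
      ‖gradient g₂ ζ‖ ≤ ψ₂ s)
    (ftil : ℝ → EuclideanSpace ℝ (Fin 2) → ℝ)
    (L : ℝ → ℝ) (hLc : Continuous L) (hLm : Monotone L) (hL1 : ∀ s, 1 ≤ L s)
    (hLipf : ∀ t ≥ (0:ℝ), ∀ x ξ : EuclideanSpace ℝ (Fin 2),
      |ftil t x - ftil t ξ| ≤ L (‖x‖ + ‖ξ‖) * ‖x - ξ‖)
    (hgrf : ∀ t ≥ (0:ℝ), ∀ ξ : EuclideanSpace ℝ (Fin 2), |ftil t ξ| ≤ L ‖ξ‖ * ‖ξ‖)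
    (gtil : ℝ → EuclideanSpace ℝ (Fin 2) → ℝ)
    (hgtil : ∀ t x, gtil t x = g₂ (ζd t + x))
    (M : ℝ → ℝ)
    (hM : ∀ s, M s = ((1 + μ) ^ 2 + L s) *
      (1 + s * ψ₂ s / sInf (g₂ '' {ζ | ‖ζ‖ ≤ Λ₁ + s}))) :
    ∀ t ≥ (0:ℝ), ∀ x ξ : EuclideanSpace ℝ (Fin 2),
      gtil t x * |k14 μ ftil gtil t x - k14 μ ftil gtil t ξ| ≤ M (‖x‖ + ‖ξ‖) * ‖ξ - x‖ := by
  intro t ht x ξ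
  set s : ℝ := ‖x‖ + ‖ξ‖ with hsdef
  have hs0 : (0:ℝ) ≤ s := by positivity
  have hΛ : ∀ u ≥ (0:ℝ), ‖ζd u‖ ≤ Λ₁ := fun u hu => hΛ₁ ▸ le_csSup hζdbd ⟨u, hu, rfl⟩
  have hΛ0 : 0 ≤ Λ₁ := le_trans (norm_nonneg _) (hΛ 0 le_rfl)
  set K : Set (EuclideanSpace ℝ (Fin 2)) := {ζ | ‖ζ‖ ≤ Λ₁ + s} with hKdef
  have hKball : K = Metric.closedBall 0 (Λ₁ + s) := by
    ext ζ; simp [hKdef, Metric.mem_closedBall, dist_zero_right]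
  have hKc : IsCompact K := by rw [hKball]; exact isCompact_closedBall 0 _
  have hKconv : Convex ℝ K := by rw [hKball]; exact convex_closedBall 0 _
  have hKne : K.Nonempty := ⟨0, by simp [hKdef]; positivity⟩
  set m : ℝ := sInf (g₂ '' K) with hmdef
  have hmimg : IsCompact (g₂ '' K) := hKc.image hg₂C1.continuous
  have hmmem : m ∈ g₂ '' K := hmimg.sInf_mem (hKne.image _)
  have hm0 : 0 < m := by obtain ⟨ζ, _, hζ⟩ := hmmem; exact hζ ▸ hg₂pos ζ
  have hmle : ∀ ζ ∈ K, m ≤ g₂ ζ := fun ζ hζ => csInf_le hmimg.bddBelow ⟨ζ, hζ, rfl⟩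
  -- membership of translated points
  have hxK : ζd t + x ∈ K := by
    have : ‖ζd t + x‖ ≤ ‖ζd t‖ + ‖x‖ := norm_add_le _ _
    refine le_trans this ?_
    have := hΛ t ht
    have : ‖ζd t‖ + ‖x‖ ≤ Λ₁ + (‖x‖ + ‖ξ‖) := by
      have h2 : (0:ℝ) ≤ ‖ξ‖ := norm_nonneg _
      linarith [hΛ t ht]
    exact this
  have hξK : ζd t + ξ ∈ K := by
    refine le_trans (norm_add_le _ _) ?_
    have h2 : (0:ℝ) ≤ ‖x‖ := norm_nonneg _
    have := hΛ t ht
    show ‖ζd t‖ + ‖ξ‖ ≤ Λ₁ + s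
    simp only [hsdef]; linarith
  -- Lipschitz bound on g₂ over K
  have hder : ∀ ζ ∈ K, ‖fderiv ℝ g₂ ζ‖ ≤ ψ₂ s := by
    intro ζ hζ
    have h := hψ₂ s hs0 ζ hζ
    rwa [gradient, LinearIsometryEquiv.norm_map] at h
  have hdiff : ∀ ζ ∈ K, DifferentiableAt ℝ g₂ ζ :=
    fun ζ _ => (hg₂C1.differentiable one_ne_zero).differentiableAt
  have hgLip : ‖g₂ (ζd t + x) - g₂ (ζd t + ξ)‖ ≤ ψ₂ s * ‖(ζd t + x) - (ζd t + ξ)‖ :=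
    hKconv.norm_image_sub_le_of_norm_fderiv_le hdiff hder hξK hxK
  have hsub : (ζd t + x) - (ζd t + ξ) = x - ξ := by abel
  rw [hsub] at hgLip
  -- abbreviations
  set a : ℝ := (1 + μ ^ 2) * x 0 + 2 * μ * x 1 + ftil t x with hadef
  set b : ℝ := (1 + μ ^ 2) * ξ 0 + 2 * μ * ξ 1 + ftil t ξ with hbdef
  set gx : ℝ := gtil t x with hgxdef
  set gξ : ℝ := gtil t ξ with hgξdef
  have hgx0 : 0 < gx := by rw [hgxdef, hgtil]; exact hg₂pos _
  have hgξ0 : 0 < gξ := by rw [hgξdef, hgtil]; exact hg₂pos _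
  have hgξm : m ≤ gξ := by rw [hgξdef, hgtil]; exact hmle _ hξK
  set C : ℝ := (1 + μ) ^ 2 + L s with hCdef
  have hC0 : 0 < C := by nlinarith [hL1 s]
  -- bound |a - b|
  have hab : |a - b| ≤ C * ‖x - ξ‖ := by
    have h0 : |x 0 - ξ 0| ≤ ‖x - ξ‖ := by
      have := coord_le_norm14 (x - ξ) 0
      simpa using this
    have h1 : |x 1 - ξ 1| ≤ ‖x - ξ‖ := by
      have := coord_le_norm14 (x - ξ) 1
      simpa using this
    have hf := hLipf t ht x ξ
    have habs : |a - b| ≤ (1 + μ ^ 2) * |x 0 - ξ 0| + 2 * μ * |x 1 - ξ 1|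
        + |ftil t x - ftil t ξ| := by
      rw [hadef, hbdef]
      have e : (1 + μ ^ 2) * x 0 + 2 * μ * x 1 + ftil t x
          - ((1 + μ ^ 2) * ξ 0 + 2 * μ * ξ 1 + ftil t ξ)
          = (1 + μ ^ 2) * (x 0 - ξ 0) + 2 * μ * (x 1 - ξ 1) + (ftil t x - ftil t ξ) := by
        ring
      rw [e]
      calc |(1 + μ ^ 2) * (x 0 - ξ 0) + 2 * μ * (x 1 - ξ 1) + (ftil t x - ftil t ξ)|
          ≤ |(1 + μ ^ 2) * (x 0 - ξ 0) + 2 * μ * (x 1 - ξ 1)| + |ftil t x - ftil t ξ| :=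
            abs_add_le _ _
        _ ≤ |(1 + μ ^ 2) * (x 0 - ξ 0)| + |2 * μ * (x 1 - ξ 1)| + |ftil t x - ftil t ξ| :=
            add_le_add_left (abs_add_le _ _) _
        _ = (1 + μ ^ 2) * |x 0 - ξ 0| + 2 * μ * |x 1 - ξ 1| + |ftil t x - ftil t ξ| := by
            rw [abs_mul, abs_mul, abs_of_pos (by positivity : (0:ℝ) < 1 + μ ^ 2),
              abs_of_pos (by positivity : (0:ℝ) < 2 * μ)]
    calc |a - b| ≤ (1 + μ ^ 2) * |x 0 - ξ 0| + 2 * μ * |x 1 - ξ 1|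
        + |ftil t x - ftil t ξ| := habs
      _ ≤ (1 + μ ^ 2) * ‖x - ξ‖ + 2 * μ * ‖x - ξ‖ + L s * ‖x - ξ‖ := by
          gcongr
      _ = C * ‖x - ξ‖ := by rw [hCdef]; ring
  -- bound |b|
  have hb : |b| ≤ C * s := by
    have h0 : |ξ 0| ≤ ‖ξ‖ := coord_le_norm14 ξ 0
    have h1 : |ξ 1| ≤ ‖ξ‖ := coord_le_norm14 ξ 1
    have hfξ : |ftil t ξ| ≤ L s * ‖ξ‖ := by
      refine le_trans (hgrf t ht ξ) ?_
      have : L ‖ξ‖ ≤ L s := hLm (le_add_of_nonneg_left (norm_nonneg x))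
      have hn : (0:ℝ) ≤ ‖ξ‖ := norm_nonneg _
      nlinarith
    have habs : |b| ≤ (1 + μ ^ 2) * |ξ 0| + 2 * μ * |ξ 1| + |ftil t ξ| := by
      rw [hbdef]
      calc |(1 + μ ^ 2) * ξ 0 + 2 * μ * ξ 1 + ftil t ξ|
          ≤ |(1 + μ ^ 2) * ξ 0| + |2 * μ * ξ 1| + |ftil t ξ| :=
            le_trans (abs_add_le _ _) (add_le_add_left (abs_add_le _ _) _)
        _ = (1 + μ ^ 2) * |ξ 0| + 2 * μ * |ξ 1| + |ftil t ξ| := by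
            rw [abs_mul, abs_mul, abs_of_pos (by positivity : (0:ℝ) < 1 + μ ^ 2),
              abs_of_pos (by positivity : (0:ℝ) < 2 * μ)]
    have hξs : ‖ξ‖ ≤ s := le_add_of_nonneg_left (norm_nonneg x)
    calc |b| ≤ (1 + μ ^ 2) * |ξ 0| + 2 * μ * |ξ 1| + |ftil t ξ| := habs
      _ ≤ (1 + μ ^ 2) * ‖ξ‖ + 2 * μ * ‖ξ‖ + L s * ‖ξ‖ := by gcongr
      _ = C * ‖ξ‖ := by rw [hCdef]; ring
      _ ≤ C * s := by gcongr
  -- |gx - gξ| bound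
  have hgdiff : |gx - gξ| ≤ ψ₂ s * ‖x - ξ‖ := by
    rw [hgxdef, hgξdef, hgtil, hgtil]
    simpa [Real.norm_eq_abs] using hgLip
  -- main identity
  have hkey : gx * |k14 μ ftil gtil t x - k14 μ ftil gtil t ξ|
      = |(b - a) + (gx - gξ) * b / gξ| := by
    have e1 : k14 μ ftil gtil t x - k14 μ ftil gtil t ξ
        = ((b - a) + (gx - gξ) * b / gξ) / gx := by
      simp only [k14, ← hadef, ← hbdef, ← hgxdef, ← hgξdef]
      field_simp
      ring
    rw [e1, abs_div, abs_of_pos hgx0, mul_div_cancel₀ _ (ne_of_gt hgx0)]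
  rw [hkey]
  -- final estimate
  have hterm2 : |(gx - gξ) * b / gξ| ≤ (ψ₂ s * ‖x - ξ‖) * (C * s) / m := by
    rw [abs_div, abs_mul, abs_of_pos hgξ0]
    have hψnn : 0 ≤ ψ₂ s := hψ₂nn s hs0
    have hnum : |gx - gξ| * |b| ≤ (ψ₂ s * ‖x - ξ‖) * (C * s) :=
      mul_le_mul hgdiff hb (abs_nonneg _) (by positivity)
    exact div_le_div₀ (by positivity) hnum hm0 hgξm
  have hfinal : |(b - a) + (gx - gξ) * b / gξ|
      ≤ C * ‖x - ξ‖ + (ψ₂ s * ‖x - ξ‖) * (C * s) / m := by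
    have hba : |b - a| ≤ C * ‖x - ξ‖ := by rw [abs_sub_comm]; exact hab
    exact le_trans (abs_add_le _ _) (add_le_add hba hterm2)
  refine le_trans hfinal ?_
  have hMs : M s = C * (1 + s * ψ₂ s / m) := by rw [hM, hCdef, hmdef, hKdef]
  have hnorm : ‖ξ - x‖ = ‖x - ξ‖ := norm_sub_rev _ _
  rw [hnorm, hMs]
  have : C * ‖x - ξ‖ + (ψ₂ s * ‖x - ξ‖) * (C * s) / m
      = C * (1 + s * ψ₂ s / m) * ‖x - ξ‖ := by
    field_simp
  rw [this]
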